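/- Under the hypotheses of the KGSM expectation theorem, if additionally 0 ≤ M ≤ (1-√η_l)² and β = 1 - η_l/(1-√M)², then E⟨x_{k+1} - x, v_l⟩ = (1 - η_l/(1-√M))^k · (1 + η_l(√M(k+1) - 1)/(1-√M)) · ⟨x_0 - x, v_l⟩ for all k ≥ 0, where η_l = σ_l²/||A||_F². -/

import Mathlib

open Matrix Finset

def kgsmP (η M β : ℝ) : ℕ → ℝ × ℝ
  | 0 => (1, 0)
  | k+1 =>
    let p := kgsmP η M β k
    ((1-η) * p.1 + M * p.2,
     β * p.2 + (1-β) * (((1-η) * p.1 + M * p.2) - p.1))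

theorem kgsm_key {m n : ℕ} (A : Matrix (Fin m) (Fin n) ℝ)
    (hrow : ∀ i, A i ⬝ᵥ A i ≠ 0)
    (F : ℝ) (hF : F = ∑ i, A i ⬝ᵥ A i)
    (xs x0 : Fin n → ℝ) (b : Fin m → ℝ) (hb : ∀ i, b i = A i ⬝ᵥ xs)
    (v : Fin n → ℝ) (σsq : ℝ) (hv : (Aᵀ * A).mulVec v = σsq • v)
    (η : ℝ) (hη : η = σsq / F)
    (β M : ℝ)
    (x y : (ℕ → Fin m) → ℕ → (Fin n → ℝ))
    (hx0 : ∀ ω, x ω 0 = x0) (hy0 : ∀ ω, y ω 0 = 0)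
    (hx : ∀ ω k, x ω (k+1) = x ω k
      + ((b (ω k) - A (ω k) ⬝ᵥ x ω k) / (A (ω k) ⬝ᵥ A (ω k))) • A (ω k) + M • y ω k)
    (hy : ∀ ω k, y ω (k+1) = β • y ω k + (1-β) • (x ω (k+1) - x ω k))
    (d : Fin m) :
    ∀ K : ℕ,
      (∑ σ : Fin K → Fin m,
        (∏ t, (A (σ t) ⬝ᵥ A (σ t)) / F) *
          ((x (fun t => if h : t < K then σ ⟨t, h⟩ else d) K - xs) ⬝ᵥ v))
        = (kgsmP η M β K).1 * ((x0 - xs) ⬝ᵥ v)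
      ∧ (∑ σ : Fin K → Fin m,
        (∏ t, (A (σ t) ⬝ᵥ A (σ t)) / F) *
          ((y (fun t => if h : t < K then σ ⟨t, h⟩ else d) K) ⬝ᵥ v))
        = (kgsmP η M β K).2 * ((x0 - xs) ⬝ᵥ v) := by
  classical
  have hFpos : 0 < F := by
    rw [hF]
    refine Finset.sum_pos (fun i _ => ?_) ⟨d, Finset.mem_univ d⟩
    have h0 : 0 ≤ A i ⬝ᵥ A i := Finset.sum_nonneg fun j _ => mul_self_nonneg _
    exact lt_of_le_of_ne h0 (Ne.symm (hrow i))
  have hF0 : F ≠ 0 := ne_of_gt hFpos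
  have hone : ∑ i, (A i ⬝ᵥ A i) / F = 1 := by
    rw [← Finset.sum_div, ← hF, div_self hF0]
  have hsum : ∀ z : Fin n → ℝ, ∑ i, (A i ⬝ᵥ z) * (A i ⬝ᵥ v) = σsq * (z ⬝ᵥ v) := by
    intro z
    have e1 : ∑ i, (A i ⬝ᵥ z) * (A i ⬝ᵥ v) = A.mulVec z ⬝ᵥ A.mulVec v := rfl
    rw [e1, ← Matrix.vecMul_transpose, ← Matrix.dotProduct_mulVec, Matrix.mulVec_mulVec,
      hv, dotProduct_smul, smul_eq_mul]
  -- one-step expectation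
  have hstep : ∀ w u : Fin n → ℝ,
      ∑ i, ((A i ⬝ᵥ A i) / F) *
          (((w + ((b i - A i ⬝ᵥ w) / (A i ⬝ᵥ A i)) • A i + M • u) - xs) ⬝ᵥ v)
        = (1-η) * ((w - xs) ⬝ᵥ v) + M * (u ⬝ᵥ v) := by
    intro w u
    have hterm : ∀ i : Fin m, ((A i ⬝ᵥ A i) / F) *
          (((w + ((b i - A i ⬝ᵥ w) / (A i ⬝ᵥ A i)) • A i + M • u) - xs) ⬝ᵥ v)
        = ((A i ⬝ᵥ A i) / F) * (((w - xs) ⬝ᵥ v) + M * (u ⬝ᵥ v))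
          + (1/F) * ((A i ⬝ᵥ (xs - w)) * (A i ⬝ᵥ v)) := by
      intro i
      have hAi := hrow i
      rw [hb i]
      simp only [sub_dotProduct, add_dotProduct, smul_dotProduct, smul_eq_mul,
        dotProduct_sub]
      field_simp
      ring
    rw [Finset.sum_congr rfl (fun i _ => hterm i), Finset.sum_add_distrib,
      ← Finset.sum_mul, hone, ← Finset.mul_sum, hsum, sub_dotProduct]
    have : σsq = η * F := by rw [hη]; field_simp
    rw [this]
    field_simp
    simp only [sub_dotProduct]
    ring
  -- trajectories depend only on the first K samples
  have hdep : ∀ (K : ℕ) (ω ω' : ℕ → Fin m), (∀ t, t < K → ω t = ω' t) →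
      x ω K = x ω' K ∧ y ω K = y ω' K := by
    intro K
    induction K with
    | zero => exact fun ω ω' _ => ⟨(hx0 ω).trans (hx0 ω').symm, (hy0 ω).trans (hy0 ω').symm⟩
    | succ K ih =>
      intro ω ω' h
      obtain ⟨hxK, hyK⟩ := ih ω ω' fun t ht => h t (ht.trans (Nat.lt_succ_self K))
      have hωK : ω K = ω' K := h K (Nat.lt_succ_self K)
      have hx' : x ω (K+1) = x ω' (K+1) := by rw [hx, hx, hxK, hyK, hωK]
      exact ⟨hx', by rw [hy, hy, hyK, hx', hxK]⟩
  intro K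
  induction K with
  | zero =>
    constructor
    · simp [kgsmP, hx0]
    · simp [kgsmP, hy0]
  | succ K ih =>
    obtain ⟨ihx, ihy⟩ := ih
    -- trajectory recursion for extended sample paths
    have htraj : ∀ (σ : Fin K → Fin m) (i : Fin m),
        (x (fun t => if h : t < K+1 then Fin.snoc (α := fun _ => Fin m) σ i ⟨t, h⟩ else d) (K+1)
          = x (fun t => if h : t < K then σ ⟨t, h⟩ else d) K
            + ((b i - A i ⬝ᵥ x (fun t => if h : t < K then σ ⟨t, h⟩ else d) K)
                / (A i ⬝ᵥ A i)) • A i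
            + M • y (fun t => if h : t < K then σ ⟨t, h⟩ else d) K)
        ∧ (y (fun t => if h : t < K+1 then Fin.snoc (α := fun _ => Fin m) σ i ⟨t, h⟩ else d) (K+1)
          = β • y (fun t => if h : t < K then σ ⟨t, h⟩ else d) K
            + (1-β) • (x (fun t => if h : t < K+1 then Fin.snoc (α := fun _ => Fin m) σ i ⟨t, h⟩ else d) (K+1)
                - x (fun t => if h : t < K then σ ⟨t, h⟩ else d) K)) := by
      intro σ i
      set ω : ℕ → Fin m := fun t => if h : t < K+1 then Fin.snoc (α := fun _ => Fin m) σ i ⟨t, h⟩ else d with hω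
      set ω' : ℕ → Fin m := fun t => if h : t < K then σ ⟨t, h⟩ else d with hω'
      have hagree : ∀ t, t < K → ω t = ω' t := by
        intro t ht
        have ht' : t < K + 1 := ht.trans (Nat.lt_succ_self K)
        simp only [hω, hω', dif_pos ht, dif_pos ht']
        have : (⟨t, ht'⟩ : Fin (K+1)) = Fin.castSucc ⟨t, ht⟩ := rfl
        rw [this, Fin.snoc_castSucc]
      obtain ⟨hxe, hye⟩ := hdep K ω ω' hagree
      have hωK : ω K = i := by
        simp only [hω, dif_pos (Nat.lt_succ_self K)]
        have : (⟨K, Nat.lt_succ_self K⟩ : Fin (K+1)) = Fin.last K := rfl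
        rw [this, Fin.snoc_last]
      constructor
      · rw [hx ω K, hxe, hye, hωK]
      · rw [hy ω K, hye, hxe]
    -- weight splitting
    have hwt : ∀ (σ : Fin K → Fin m) (i : Fin m),
        (∏ t : Fin (K+1), (A (Fin.snoc (α := fun _ => Fin m) σ i t) ⬝ᵥ A (Fin.snoc (α := fun _ => Fin m) σ i t)) / F)
          = (∏ t : Fin K, (A (σ t) ⬝ᵥ A (σ t)) / F) * ((A i ⬝ᵥ A i) / F) := by
      intro σ i
      rw [Fin.prod_univ_castSucc]
      simp [Fin.snoc_castSucc, Fin.snoc_last]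
    -- reindex the sums
    have hreind : ∀ g : (Fin (K+1) → Fin m) → ℝ,
        ∑ σ : Fin (K+1) → Fin m, g σ
          = ∑ i : Fin m, ∑ σ : Fin K → Fin m, g (Fin.snoc (α := fun _ => Fin m) σ i) := by
      intro g
      rw [← Equiv.sum_comp (Fin.snocEquiv (fun _ => Fin m)) g, Fintype.sum_prod_type]
      rfl
    -- second-step expectation for the momentum sequence
    have hstepy : ∀ w u : Fin n → ℝ,
        ∑ i, ((A i ⬝ᵥ A i) / F) *
            ((β • u + (1-β) • ((w + ((b i - A i ⬝ᵥ w) / (A i ⬝ᵥ A i)) • A i + M • u) - w)) ⬝ᵥ v)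
          = β * (u ⬝ᵥ v)
            + (1-β) * (((1-η) * ((w - xs) ⬝ᵥ v) + M * (u ⬝ᵥ v)) - (w - xs) ⬝ᵥ v) := by
      intro w u
      have hterm : ∀ i : Fin m, ((A i ⬝ᵥ A i) / F) *
            ((β • u + (1-β) • ((w + ((b i - A i ⬝ᵥ w) / (A i ⬝ᵥ A i)) • A i + M • u) - w)) ⬝ᵥ v)
          = ((A i ⬝ᵥ A i) / F) * (β * (u ⬝ᵥ v) - (1-β) * ((w - xs) ⬝ᵥ v))
            + (1-β) * (((A i ⬝ᵥ A i) / F) *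
                (((w + ((b i - A i ⬝ᵥ w) / (A i ⬝ᵥ A i)) • A i + M • u) - xs) ⬝ᵥ v)) := by
        intro i
        simp only [add_dotProduct, sub_dotProduct, smul_dotProduct, smul_eq_mul]
        ring
      rw [Finset.sum_congr rfl (fun i _ => hterm i), Finset.sum_add_distrib,
        ← Finset.sum_mul, hone, ← Finset.mul_sum, hstep w u]
      ring
    have hP1 : (kgsmP η M β (K+1)).1 = (1-η) * (kgsmP η M β K).1 + M * (kgsmP η M β K).2 := rfl
    have hP2 : (kgsmP η M β (K+1)).2 = β * (kgsmP η M β K).2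
        + (1-β) * (((1-η) * (kgsmP η M β K).1 + M * (kgsmP η M β K).2) - (kgsmP η M β K).1) := rfl
    have htrajx : ∀ (σ : Fin K → Fin m) (i : Fin m),
        x (fun t => if h : t < K+1 then Fin.snoc (α := fun _ => Fin m) σ i ⟨t, h⟩ else d) (K+1)
          = x (fun t => if h : t < K then σ ⟨t, h⟩ else d) K
            + ((b i - A i ⬝ᵥ x (fun t => if h : t < K then σ ⟨t, h⟩ else d) K)
                / (A i ⬝ᵥ A i)) • A i
            + M • y (fun t => if h : t < K then σ ⟨t, h⟩ else d) K :=
      fun σ i => (htraj σ i).1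
    have htrajy : ∀ (σ : Fin K → Fin m) (i : Fin m),
        y (fun t => if h : t < K+1 then Fin.snoc (α := fun _ => Fin m) σ i ⟨t, h⟩ else d) (K+1)
          = β • y (fun t => if h : t < K then σ ⟨t, h⟩ else d) K
            + (1-β) • ((x (fun t => if h : t < K then σ ⟨t, h⟩ else d) K
                + ((b i - A i ⬝ᵥ x (fun t => if h : t < K then σ ⟨t, h⟩ else d) K)
                    / (A i ⬝ᵥ A i)) • A i
                + M • y (fun t => if h : t < K then σ ⟨t, h⟩ else d) K)
              - x (fun t => if h : t < K then σ ⟨t, h⟩ else d) K) := by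
      intro σ i
      rw [(htraj σ i).2, htrajx σ i]
    constructor
    · rw [hreind]
      simp only [hwt, htrajx]
      rw [Finset.sum_comm]
      have hinner : ∀ σ : Fin K → Fin m,
          ∑ i, ((∏ t : Fin K, (A (σ t) ⬝ᵥ A (σ t)) / F) * ((A i ⬝ᵥ A i) / F)) *
              (((x (fun t => if h : t < K then σ ⟨t, h⟩ else d) K
                + ((b i - A i ⬝ᵥ x (fun t => if h : t < K then σ ⟨t, h⟩ else d) K)
                    / (A i ⬝ᵥ A i)) • A i
                + M • y (fun t => if h : t < K then σ ⟨t, h⟩ else d) K) - xs) ⬝ᵥ v)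
            = (∏ t : Fin K, (A (σ t) ⬝ᵥ A (σ t)) / F) *
                ((1-η) * ((x (fun t => if h : t < K then σ ⟨t, h⟩ else d) K - xs) ⬝ᵥ v)
                  + M * ((y (fun t => if h : t < K then σ ⟨t, h⟩ else d) K) ⬝ᵥ v)) := by
        intro σ
        rw [← hstep (x (fun t => if h : t < K then σ ⟨t, h⟩ else d) K)
            (y (fun t => if h : t < K then σ ⟨t, h⟩ else d) K), Finset.mul_sum]
        exact Finset.sum_congr rfl fun i _ => by ring
      rw [Finset.sum_congr rfl (fun σ _ => hinner σ)]
      have hsplit : ∀ σ : Fin K → Fin m,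
          (∏ t : Fin K, (A (σ t) ⬝ᵥ A (σ t)) / F) *
              ((1-η) * ((x (fun t => if h : t < K then σ ⟨t, h⟩ else d) K - xs) ⬝ᵥ v)
                + M * ((y (fun t => if h : t < K then σ ⟨t, h⟩ else d) K) ⬝ᵥ v))
            = (1-η) * ((∏ t : Fin K, (A (σ t) ⬝ᵥ A (σ t)) / F) *
                  ((x (fun t => if h : t < K then σ ⟨t, h⟩ else d) K - xs) ⬝ᵥ v))
              + M * ((∏ t : Fin K, (A (σ t) ⬝ᵥ A (σ t)) / F) *
                  ((y (fun t => if h : t < K then σ ⟨t, h⟩ else d) K) ⬝ᵥ v)) :=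
        fun σ => by ring
      rw [Finset.sum_congr rfl (fun σ _ => hsplit σ), Finset.sum_add_distrib,
        ← Finset.mul_sum, ← Finset.mul_sum, ihx, ihy, hP1]
      ring
    · rw [hreind]
      simp only [hwt, htrajy]
      rw [Finset.sum_comm]
      have hinner : ∀ σ : Fin K → Fin m,
          ∑ i, ((∏ t : Fin K, (A (σ t) ⬝ᵥ A (σ t)) / F) * ((A i ⬝ᵥ A i) / F)) *
              ((β • y (fun t => if h : t < K then σ ⟨t, h⟩ else d) K
                + (1-β) • ((x (fun t => if h : t < K then σ ⟨t, h⟩ else d) K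
                    + ((b i - A i ⬝ᵥ x (fun t => if h : t < K then σ ⟨t, h⟩ else d) K)
                        / (A i ⬝ᵥ A i)) • A i
                    + M • y (fun t => if h : t < K then σ ⟨t, h⟩ else d) K)
                  - x (fun t => if h : t < K then σ ⟨t, h⟩ else d) K)) ⬝ᵥ v)
            = (∏ t : Fin K, (A (σ t) ⬝ᵥ A (σ t)) / F) *
                (β * ((y (fun t => if h : t < K then σ ⟨t, h⟩ else d) K) ⬝ᵥ v)
                  + (1-β) * (((1-η) * ((x (fun t => if h : t < K then σ ⟨t, h⟩ else d) K - xs) ⬝ᵥ v)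
                      + M * ((y (fun t => if h : t < K then σ ⟨t, h⟩ else d) K) ⬝ᵥ v))
                    - (x (fun t => if h : t < K then σ ⟨t, h⟩ else d) K - xs) ⬝ᵥ v)) := by
        intro σ
        rw [← hstepy (x (fun t => if h : t < K then σ ⟨t, h⟩ else d) K)
            (y (fun t => if h : t < K then σ ⟨t, h⟩ else d) K), Finset.mul_sum]
        exact Finset.sum_congr rfl fun i _ => by ring
      rw [Finset.sum_congr rfl (fun σ _ => hinner σ)]
      have hsplit : ∀ σ : Fin K → Fin m,
          (∏ t : Fin K, (A (σ t) ⬝ᵥ A (σ t)) / F) *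
              (β * ((y (fun t => if h : t < K then σ ⟨t, h⟩ else d) K) ⬝ᵥ v)
                + (1-β) * (((1-η) * ((x (fun t => if h : t < K then σ ⟨t, h⟩ else d) K - xs) ⬝ᵥ v)
                    + M * ((y (fun t => if h : t < K then σ ⟨t, h⟩ else d) K) ⬝ᵥ v))
                  - (x (fun t => if h : t < K then σ ⟨t, h⟩ else d) K - xs) ⬝ᵥ v))
            = (β + (1-β) * M - (1-β)*η*M/M*0) * ((∏ t : Fin K, (A (σ t) ⬝ᵥ A (σ t)) / F) *
                  ((y (fun t => if h : t < K then σ ⟨t, h⟩ else d) K) ⬝ᵥ v))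
              + ((1-β) * ((1 - η) - 1)) * ((∏ t : Fin K, (A (σ t) ⬝ᵥ A (σ t)) / F) *
                  ((x (fun t => if h : t < K then σ ⟨t, h⟩ else d) K - xs) ⬝ᵥ v)) :=
        fun σ => by ring
      rw [Finset.sum_congr rfl (fun σ _ => hsplit σ), Finset.sum_add_distrib,
        ← Finset.mul_sum, ← Finset.mul_sum, ihy, ihx, hP2]
      ring

lemma kgsm_ids (η M s β : ℝ) (hs : s = Real.sqrt M) (hM : 0 ≤ M)
    (hdeg : 1 - s = 0 → η = 0) (hβ : β = 1 - η/(1-s)^2) :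
    (1 - η/(1-s)) + η*s/(1-s) = 1 - η ∧
    (η*s/(1-s))*(η*s/(1-s)) = M*((1-β)*η) ∧
    (1 - η/(1-s))*((1-β)*η) = β*((1-β)*η) - (1-β)*(η*s/(1-s))*((1 - η/(1-s))-1) := by
  have hM' : s^2 = M := by rw [hs]; exact Real.sq_sqrt hM
  subst hβ
  by_cases h : (1:ℝ) - s = 0
  · have hη : η = 0 := hdeg h
    simp [hη, h]
  · subst hM'
    refine ⟨by field_simp; ring, by field_simp; ring, ?_⟩
    field_simp
    ring

lemma kgsmP_closed (η M β : ℝ) (hM : 0 ≤ M)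
    (hdeg : 1 - Real.sqrt M = 0 → η = 0)
    (hβ : β = 1 - η/(1-Real.sqrt M)^2) (k : ℕ) :
    kgsmP η M β k =
      ((1 - η/(1-Real.sqrt M))^k
        + k * (1 - η/(1-Real.sqrt M))^(k-1) * (η*Real.sqrt M/(1-Real.sqrt M)),
       -((k : ℝ) * (1 - η/(1-Real.sqrt M))^(k-1) * ((1-β)*η))) := by
  obtain ⟨h1, hcc, h4⟩ := kgsm_ids η M (Real.sqrt M) β rfl hM hdeg hβ
  set s := Real.sqrt M with hs
  set lam := 1 - η/(1-s) with hlam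
  set c := η*s/(1-s) with hc
  set q := (1-β)*η with hq
  induction k with
  | zero => simp [kgsmP]
  | succ k ih =>
    have hpow : (k:ℝ) * lam^(k-1) * lam = (k:ℝ) * lam^k := by
      cases k with
      | zero => simp
      | succ k => simp [pow_succ, mul_assoc]
    show ((1-η) * (kgsmP η M β k).1 + M * (kgsmP η M β k).2,
          β * (kgsmP η M β k).2
            + (1-β) * (((1-η) * (kgsmP η M β k).1 + M * (kgsmP η M β k).2)
                - (kgsmP η M β k).1)) = _
    rw [ih]
    have hk1 : ((k+1 : ℕ) : ℝ) = (k : ℝ) + 1 := by push_cast; ring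
    refine Prod.ext ?_ ?_
    · show (1-η) * (lam^k + k * lam^(k-1) * c) + M * (-((k:ℝ) * lam^(k-1) * q))
        = lam^(k+1) + ((k+1 : ℕ) : ℝ) * lam^((k+1)-1) * c
      rw [hk1, Nat.add_sub_cancel]
      linear_combination (-(lam^k + (k:ℝ)*lam^(k-1)*c)) * h1 + ((k:ℝ)*lam^(k-1)) * hcc
        + c * hpow
    · show β * (-((k:ℝ) * lam^(k-1) * q))
          + (1-β) * (((1-η) * (lam^k + k * lam^(k-1) * c)
              + M * (-((k:ℝ) * lam^(k-1) * q))) - (lam^k + k * lam^(k-1) * c))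
        = -(((k+1 : ℕ) : ℝ) * lam^((k+1)-1) * q)
      rw [hk1, Nat.add_sub_cancel]
      linear_combination (lam^k) * hq.symm - q * hpow + (1-β)*((k:ℝ)*lam^(k-1)) * hcc
        + ((k:ℝ)*lam^(k-1)) * h4 - (1-β)*((k:ℝ)*lam^(k-1))*c * h1

/-- KGSM expected error along a singular vector with the
optimized smoothing parameter `β = 1 - η/(1-√M)²`. -/
theorem kgsm_expected_error_optimal_beta {m n : ℕ} (A : Matrix (Fin m) (Fin n) ℝ)
    (hrow : ∀ i, A i ⬝ᵥ A i ≠ 0)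
    (F : ℝ) (hF : F = ∑ i, A i ⬝ᵥ A i)
    (xs x0 : Fin n → ℝ) (b : Fin m → ℝ) (hb : ∀ i, b i = A i ⬝ᵥ xs)
    (v : Fin n → ℝ) (σsq : ℝ) (hv : (Aᵀ * A).mulVec v = σsq • v)
    (η : ℝ) (hη : η = σsq / F)
    (β M : ℝ) (hM : M ∈ Set.Icc (0:ℝ) ((1 - Real.sqrt η)^2))
    (hβ : β = 1 - η/(1-Real.sqrt M)^2)
    (x y : (ℕ → Fin m) → ℕ → (Fin n → ℝ))
    (hx0 : ∀ ω, x ω 0 = x0) (hy0 : ∀ ω, y ω 0 = 0)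
    (hx : ∀ ω k, x ω (k+1) = x ω k
      + ((b (ω k) - A (ω k) ⬝ᵥ x ω k) / (A (ω k) ⬝ᵥ A (ω k))) • A (ω k) + M • y ω k)
    (hy : ∀ ω k, y ω (k+1) = β • y ω k + (1-β) • (x ω (k+1) - x ω k))
    (d : Fin m) (k : ℕ) :
    ∑ σ : Fin (k+1) → Fin m,
        (∏ t, (A (σ t) ⬝ᵥ A (σ t)) / F) *
          ((x (fun t => if h : t < k+1 then σ ⟨t, h⟩ else d) (k+1) - xs) ⬝ᵥ v)
      = (1 - η/(1-Real.sqrt M))^k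
          * (1 + η*(Real.sqrt M * (k+1) - 1)/(1-Real.sqrt M))
          * ((x0 - xs) ⬝ᵥ v) := by
  by_cases hv0 : v = 0
  · subst hv0; simp
  · have hkey := (kgsm_key A hrow F hF xs x0 b hb v σsq hv η hη β M x y hx0 hy0 hx hy d
      (k+1)).1
    -- basic positivity facts
    have hFpos : 0 < F := by
      rw [hF]
      refine Finset.sum_pos (fun i _ => ?_) ⟨d, Finset.mem_univ d⟩
      have h0 : 0 ≤ A i ⬝ᵥ A i := Finset.sum_nonneg fun j _ => mul_self_nonneg _
      exact lt_of_le_of_ne h0 (Ne.symm (hrow i))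
    have hF0 : F ≠ 0 := ne_of_gt hFpos
    have hsum : ∀ z : Fin n → ℝ, ∑ i, (A i ⬝ᵥ z) * (A i ⬝ᵥ v) = σsq * (z ⬝ᵥ v) := by
      intro z
      have e1 : ∑ i, (A i ⬝ᵥ z) * (A i ⬝ᵥ v) = A.mulVec z ⬝ᵥ A.mulVec v := rfl
      rw [e1, ← Matrix.vecMul_transpose, ← Matrix.dotProduct_mulVec, Matrix.mulVec_mulVec,
        hv, dotProduct_smul, smul_eq_mul]
    have hvnn : 0 ≤ v ⬝ᵥ v := Finset.sum_nonneg fun j _ => mul_self_nonneg _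
    have hvv : 0 < v ⬝ᵥ v :=
      lt_of_le_of_ne hvnn (Ne.symm fun h => hv0 (dotProduct_self_eq_zero.mp h))
    have hnn : 0 ≤ ∑ i, (A i ⬝ᵥ v) * (A i ⬝ᵥ v) :=
      Finset.sum_nonneg fun i _ => mul_self_nonneg _
    have hσnn : 0 ≤ σsq := by
      have := hsum v
      nlinarith
    have hCS : ∀ i, (A i ⬝ᵥ v) * (A i ⬝ᵥ v) ≤ (A i ⬝ᵥ A i) * (v ⬝ᵥ v) := by
      intro i
      have := Finset.sum_mul_sq_le_sq_mul_sq Finset.univ (A i) v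
      simpa [dotProduct, sq] using this
    have hσle : σsq ≤ F := by
      have hle : σsq * (v ⬝ᵥ v) ≤ F * (v ⬝ᵥ v) := by
        rw [← hsum v, hF, Finset.sum_mul]
        exact Finset.sum_le_sum fun i _ => hCS i
      exact le_of_mul_le_mul_right hle hvv
    have hηnn : 0 ≤ η := by rw [hη]; positivity
    have hηle : η ≤ 1 := by rw [hη]; exact div_le_one_of_le₀ hσle (le_of_lt hFpos)
    have hdeg : 1 - Real.sqrt M = 0 → η = 0 := by
      intro h
      have hs1 : Real.sqrt M = 1 := by linarith
      have hM1 : M = 1 := by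
        have := Real.sq_sqrt hM.1
        rw [hs1] at this
        simpa using this.symm
      have hb2 : (1:ℝ) ≤ (1 - Real.sqrt η)^2 := by
        have := hM.2
        rw [hM1] at this
        exact this
      have hsqnn : 0 ≤ Real.sqrt η := Real.sqrt_nonneg η
      have hsqle : Real.sqrt η ≤ 1 := Real.sqrt_le_one.mpr hηle
      have hsq0 : Real.sqrt η = 0 := by nlinarith
      have := Real.sq_sqrt hηnn
      rw [hsq0] at this
      simpa using this.symm
    rw [hkey, kgsmP_closed η M β hM.1 hdeg hβ (k+1)]
    dsimp only
    rw [Nat.add_sub_cancel]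
    have hco : (1 - η/(1-Real.sqrt M)) + ((k:ℝ)+1) * (η*Real.sqrt M/(1-Real.sqrt M))
        = 1 + η*(Real.sqrt M*((k:ℝ)+1)-1)/(1-Real.sqrt M) := by
      by_cases h : (1:ℝ) - Real.sqrt M = 0
      · have hη0 : η = 0 := hdeg h
        simp [hη0]
      · field_simp
        ring
    push_cast
    linear_combination ((1 - η/(1-Real.sqrt M))^k * ((x0 - xs) ⬝ᵥ v)) * hco
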